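/- Let G be a K_{1,4}-free split graph with partition (K, I), K a maximum clique, and suppose v ∈ K has exactly 3 neighbors in I; let U = N(v) ∩ I. Then every vertex of K has a neighbor in U, i.e., N(U) ⊇ K. -/

import Mathlib

open SimpleGraph

variable {V : Type*}

/-- `I` is an independent set in `G`. -/
def IndepOn (G : SimpleGraph V) (I : Set V) : Prop :=
  ∀ ⦃u⦄, u ∈ I → ∀ ⦃v⦄, v ∈ I → ¬ G.Adj u v

/-- `(K, I)` is a split partition of `G`: `K` a clique, `I` independent,
partitioning the vertex set. -/
def SplitPartition (G : SimpleGraph V) (K I : Set V) : Prop :=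
  Disjoint K I ∧ K ∪ I = Set.univ ∧ G.IsClique K ∧ IndepOn G I

/-- `K` is a maximum clique of `G`. -/
def MaxClique (G : SimpleGraph V) (K : Set V) : Prop :=
  G.IsClique K ∧ ∀ K' : Set V, G.IsClique K' → K'.ncard ≤ K.ncard

/-- `G` has no induced copy of the star `K_{1,n}` (center plus `n` pairwise
nonadjacent leaves). -/
def StarFree (G : SimpleGraph V) (n : ℕ) : Prop :=
  ¬ ∃ (c : V) (L : Finset V), L.card = n ∧ c ∉ L ∧ (∀ l ∈ L, G.Adj c l) ∧
      (∀ l ∈ L, ∀ m ∈ L, l ≠ m → ¬ G.Adj l m)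

/-- If `v ∈ K` has exactly 3 neighbors in `I` in a `K_{1,4}`-free split graph,
then every vertex of `K` has a neighbor in `U = N(v) ∩ I`. -/
theorem k14free_claimA [Fintype V] (G : SimpleGraph V) (K I : Set V)
    (hsplit : SplitPartition G K I) (hmax : MaxClique G K)
    (hfree : StarFree G 4) (v : V) (hv : v ∈ K)
    (hdeg : (G.neighborSet v ∩ I).ncard = 3) :
    ∀ w ∈ K, ∃ u ∈ G.neighborSet v ∩ I, G.Adj w u := by

  classical
  obtain ⟨hdisj, -, hclique, hindep⟩ := hsplit
  set U := G.neighborSet v ∩ I with hU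
  have hfin : U.Finite := Set.toFinite U
  have hne : U.Nonempty := by
    apply Set.nonempty_of_ncard_ne_zero; rw [hdeg]; norm_num
  intro w hw
  by_contra hcon
  push_neg at hcon
  obtain ⟨u0, hu0⟩ := hne
  rcases eq_or_ne w v with rfl | hwv
  · exact hcon u0 hu0 hu0.1
  · -- build an induced K_{1,4}
    have hvnU : v ∉ U := fun h => G.loopless.irrefl v h.1
    have hwnU : w ∉ U := fun h => hdisj.le_bot ⟨hw, h.2⟩
    apply hfree
    refine ⟨v, insert w hfin.toFinset, ?_, ?_, ?_, ?_⟩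
    · rw [Finset.card_insert_of_notMem (by simpa using hwnU)]
      rw [Set.ncard_eq_toFinset_card _ hfin] at hdeg
      omega
    · simp only [Finset.mem_insert, Set.Finite.mem_toFinset]
      rintro (rfl | h)
      · exact hwv rfl
      · exact hvnU h
    · intro l hl
      simp only [Finset.mem_insert, Set.Finite.mem_toFinset] at hl
      rcases hl with rfl | hl
      · exact hclique hv hw (Ne.symm hwv)
      · exact hl.1
    · intro l hl m hm hlm
      simp only [Finset.mem_insert, Set.Finite.mem_toFinset] at hl hm
      rcases hl with rfl | hl
      · rcases hm with rfl | hm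
        · exact absurd rfl hlm
        · exact hcon m hm
      · rcases hm with rfl | hm
        · exact fun h => hcon l hl h.symm
        · exact hindep hl.2 hm.2
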